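/- For a ≥ 0 and b > 0, ∫_{-1}^{1} (a²+b²)·b / ((a²v² + b²)·√(1 - v²)) dv = π√(a²+b²). -/

import Mathlib

open Real

theorem oblique_cylinder_mean_curvature (a b : ℝ) (ha : 0 ≤ a) (hb : 0 < b) :
    ∫ v in (-1:ℝ)..1,
        (a ^ 2 + b ^ 2) * b / ((a ^ 2 * v ^ 2 + b ^ 2) * Real.sqrt (1 - v ^ 2)) =
      π * Real.sqrt (a ^ 2 + b ^ 2) := by
  have hc : (0:ℝ) < a ^ 2 + b ^ 2 := by positivity
  have hcs : Real.sqrt (a ^ 2 + b ^ 2) ^ 2 = a ^ 2 + b ^ 2 := Real.sq_sqrt hc.le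
  have hcs0 : (0:ℝ) < Real.sqrt (a ^ 2 + b ^ 2) := Real.sqrt_pos.2 hc
  have hd : ∀ v : ℝ, (0:ℝ) < a ^ 2 * v ^ 2 + b ^ 2 := fun v => by positivity
  have hD : ∀ v : ℝ, (0:ℝ) < Real.sqrt (a ^ 2 * v ^ 2 + b ^ 2) := fun v =>
    Real.sqrt_pos.2 (hd v)
  set F : ℝ → ℝ := fun v => Real.sqrt (a ^ 2 + b ^ 2) *
      Real.arcsin (Real.sqrt (a ^ 2 + b ^ 2) * v / Real.sqrt (a ^ 2 * v ^ 2 + b ^ 2)) with hF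
  have hderiv : ∀ v ∈ Set.Ioo (-1:ℝ) 1, HasDerivAt F
      ((a ^ 2 + b ^ 2) * b / ((a ^ 2 * v ^ 2 + b ^ 2) * Real.sqrt (1 - v ^ 2))) v := by
    intro v hv
    have hv2 : v ^ 2 < 1 := by
      have h1 := hv.1; have h2 := hv.2
      nlinarith
    set D := Real.sqrt (a ^ 2 * v ^ 2 + b ^ 2) with hDdef
    have hD0 : 0 < D := hD v
    have hDsq : D ^ 2 = a ^ 2 * v ^ 2 + b ^ 2 := Real.sq_sqrt (hd v).le
    set s := Real.sqrt (a ^ 2 + b ^ 2) * v / D with hsdef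
    have hsq : s ^ 2 = (a ^ 2 + b ^ 2) * v ^ 2 / D ^ 2 := by
      rw [hsdef, div_pow, mul_pow, hcs]
    have hs2 : s ^ 2 < 1 := by
      rw [hsq, hDsq, div_lt_one (hd v)]
      nlinarith [mul_lt_mul_of_pos_left hv2 (show (0:ℝ) < b ^ 2 by positivity)]
    have hs1 : s ≠ 1 := by nlinarith
    have hs1' : s ≠ -1 := by nlinarith
    have hS : (0:ℝ) < Real.sqrt (1 - v ^ 2) := Real.sqrt_pos.2 (by nlinarith)
    have hS2 : Real.sqrt (1 - v ^ 2) ^ 2 = 1 - v ^ 2 := Real.sq_sqrt (by nlinarith)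
    -- derivative of the inner quotient
    have hq : HasDerivAt (fun v : ℝ => a ^ 2 * v ^ 2 + b ^ 2) (a ^ 2 * (2 * v)) v := by
      simpa using ((hasDerivAt_pow 2 v).const_mul (a ^ 2)).add_const (b ^ 2)
    have hsqrt : HasDerivAt (fun v : ℝ => Real.sqrt (a ^ 2 * v ^ 2 + b ^ 2))
        (a ^ 2 * (2 * v) / (2 * D)) v := hq.sqrt (hd v).ne'
    have hnum : HasDerivAt (fun v : ℝ => Real.sqrt (a ^ 2 + b ^ 2) * v)
        (Real.sqrt (a ^ 2 + b ^ 2)) v := by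
      simpa using (hasDerivAt_id v).const_mul (Real.sqrt (a ^ 2 + b ^ 2))
    have hg : HasDerivAt (fun v : ℝ => Real.sqrt (a ^ 2 + b ^ 2) * v /
        Real.sqrt (a ^ 2 * v ^ 2 + b ^ 2))
        ((Real.sqrt (a ^ 2 + b ^ 2) * D - Real.sqrt (a ^ 2 + b ^ 2) * v *
          (a ^ 2 * (2 * v) / (2 * D))) / D ^ 2) v := hnum.div hsqrt hD0.ne'
    have harc : HasDerivAt Real.arcsin (1 / Real.sqrt (1 - s ^ 2)) s :=
      Real.hasDerivAt_arcsin hs1' hs1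
    have hcomp := (harc.comp v hg).const_mul (Real.sqrt (a ^ 2 + b ^ 2))
    have h1s : Real.sqrt (1 - s ^ 2) = b * Real.sqrt (1 - v ^ 2) / D := by
      rw [show (1:ℝ) - s ^ 2 = (b * Real.sqrt (1 - v ^ 2) / D) ^ 2 from by
        rw [hsq, div_pow, mul_pow, hS2, hDsq]; field_simp; ring]
      exact Real.sqrt_sq (by positivity)
    have e1 : Real.sqrt (a ^ 2 + b ^ 2) * D - Real.sqrt (a ^ 2 + b ^ 2) * v *
        (a ^ 2 * (2 * v) / (2 * D)) = Real.sqrt (a ^ 2 + b ^ 2) * b ^ 2 / D := by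
      field_simp [hD0.ne']
      linear_combination hDsq
    have heq : Real.sqrt (a ^ 2 + b ^ 2) * (1 / Real.sqrt (1 - s ^ 2) *
        ((Real.sqrt (a ^ 2 + b ^ 2) * D - Real.sqrt (a ^ 2 + b ^ 2) * v *
          (a ^ 2 * (2 * v) / (2 * D))) / D ^ 2)) =
        (a ^ 2 + b ^ 2) * b / ((a ^ 2 * v ^ 2 + b ^ 2) * Real.sqrt (1 - v ^ 2)) := by
      rw [h1s, e1, ← hDsq]
      field_simp
      linear_combination hcs
    rw [heq] at hcomp
    exact hcomp
  have hcontF : Continuous F := by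
    apply continuous_const.mul
    apply Real.continuous_arcsin.comp
    exact (continuous_const.mul continuous_id).div
      (((continuous_const.mul (continuous_pow 2)).add continuous_const).sqrt)
      fun v => (hD v).ne'
  have hint : IntervalIntegrable (fun v : ℝ =>
      (a ^ 2 + b ^ 2) * b / ((a ^ 2 * v ^ 2 + b ^ 2) * Real.sqrt (1 - v ^ 2)))
      MeasureTheory.volume (-1) 1 := by
    apply intervalIntegral.intervalIntegrable_deriv_of_nonneg (g := F) hcontF.continuousOn
    · intro x hx
      apply hderiv
      simpa using hx
    · intro x _
      positivity
  rw [intervalIntegral.integral_eq_sub_of_hasDerivAt_of_le (by norm_num)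
    hcontF.continuousOn hderiv hint]
  have hF1 : F 1 = Real.sqrt (a ^ 2 + b ^ 2) * (π / 2) := by
    rw [hF]
    norm_num [div_self hcs0.ne', Real.arcsin_one]
  have hFm1 : F (-1) = Real.sqrt (a ^ 2 + b ^ 2) * (-(π / 2)) := by
    rw [hF]
    norm_num [neg_div, div_self hcs0.ne', Real.arcsin_neg_one]
  rw [hF1, hFm1]
  ring
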